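/- In any feasible update sequence, if block b₁ depends on block b₂ (b₁ → b₂), then the start vertex of b₂ is updated in a round strictly before the round in which the start vertex of b₁ is updated. -/

import Mathlib

/-!
A formal model of congestion-free flow rerouting (network update scheduling).
An update flow network consists of a source `s`, a terminal `t`, edge
capacities, and `k` update flow pairs, each given by an old `s`-`t` path and
an update (new) `s`-`t` path (represented as lists of vertices) with a demand.
An update sequence assigns to every update `(v, i)` (vertex `v`, pair `i`) a
round; it is feasible if resolving all updates of earlier rounds together with
any subset of the current round always leaves, for every pair, a unique valid
(capacity-respecting) transient `s`-`t` path among the active edges, and the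
family of transient paths jointly respects the capacities.
-/

namespace FlowUpdate

variable {V : Type} [DecidableEq V] {k : ℕ}

/-- The edges of a path given as a list of vertices. -/
def edgesOf (p : List V) : List (V × V) := p.zip p.tail

/-- The subpath of `p` from vertex `a` to vertex `z` (inclusive). -/
def segment (p : List V) (a z : V) : List V :=
  ((p.dropWhile (fun v => decide (v ≠ a))).takeWhile (fun v => decide (v ≠ z))) ++ [z]

/-- The outgoing edge of `v` on the path `p`, if any. -/
def outEdge (p : List V) (v : V) : Option (V × V) :=
  (edgesOf p).find? (fun e => decide (e.1 = v))

/-- An update flow network with `k` update flow pairs. -/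
structure UFN (V : Type) (k : ℕ) where
  s : V
  t : V
  cap : V → V → ℕ
  old : Fin k → List V
  new : Fin k → List V
  demand : Fin k → ℕ

namespace UFN

/-- After resolving the set of updates `U`, edge `e` is active for pair `i` iff
it is an old edge whose tail is not yet updated, or a new edge whose tail is
updated. -/
def active (G : UFN V k) (U : Set (V × Fin k)) (i : Fin k) (e : V × V) : Prop :=
  (e ∈ edgesOf (G.old i) ∧ (e.1, i) ∉ U) ∨ (e ∈ edgesOf (G.new i) ∧ (e.1, i) ∈ U)

/-- `p` is a simple `s`-`t` path all of whose edges satisfy `E`. -/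
def IsPathIn (E : V × V → Prop) (s t : V) (p : List V) : Prop :=
  p.head? = some s ∧ p.getLast? = some t ∧ List.Chain' (fun u v => E (u, v)) p ∧ p.Nodup

/-- `p` respects the capacities for the demand of pair `i`. -/
def ValidPath (G : UFN V k) (i : Fin k) (p : List V) : Prop :=
  ∀ e ∈ edgesOf p, G.demand i ≤ G.cap e.1 e.2

/-- `T` is the unique valid transient path of pair `i` after resolving `U`. -/
def TransientPair (G : UFN V k) (U : Set (V × Fin k)) (i : Fin k) (T : List V) : Prop :=
  IsPathIn (G.active U i) G.s G.t T ∧ G.ValidPath i T ∧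
    ∀ p, IsPathIn (G.active U i) G.s G.t p → G.ValidPath i p → p = T

/-- After resolving `U`, every pair has a unique valid transient path, and the
family of transient paths jointly respects the capacities. -/
def TransientFamily (G : UFN V k) (U : Set (V × Fin k)) : Prop :=
  ∃ T : Fin k → List V,
    (∀ i, G.TransientPair U i (T i)) ∧
    (∀ u v : V, (∑ i : Fin k, if (u, v) ∈ edgesOf (T i) then G.demand i else 0) ≤ G.cap u v)

/-- An update sequence (an assignment of rounds to all updates) is feasible if
after resolving all updates of rounds `< r` together with any subset of the
updates of round `r`, all pairs admit a transient family. -/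
def Feasible (G : UFN V k) (R : V × Fin k → ℕ) : Prop :=
  ∀ r : ℕ, ∀ S : Set (V × Fin k), (∀ u ∈ S, R u = r) →
    G.TransientFamily ({u | R u < r} ∪ S)

/-- `p` is a simple path from the source to the terminal. -/
def IsStPath (G : UFN V k) (p : List V) : Prop :=
  p.head? = some G.s ∧ p.getLast? = some G.t ∧ p.Nodup

/-- Well-formedness of an update flow network: all old and new flows are simple
`s`-`t` paths, each pair forms a DAG, each new path respects capacities for its
own demand, and both the old family and the new family jointly respect the
capacities. -/
def WellFormed (G : UFN V k) : Prop :=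
  (∀ i, G.IsStPath (G.old i) ∧ G.IsStPath (G.new i)) ∧
  (∀ i, ∃ ord : V → ℕ, ∀ e ∈ edgesOf (G.old i) ++ edgesOf (G.new i), ord e.1 < ord e.2) ∧
  (∀ i, G.ValidPath i (G.new i)) ∧
  (∀ u v : V, (∑ i : Fin k, if (u, v) ∈ edgesOf (G.old i) then G.demand i else 0) ≤ G.cap u v) ∧
  (∀ u v : V, (∑ i : Fin k, if (u, v) ∈ edgesOf (G.new i) then G.demand i else 0) ≤ G.cap u v)

/-- The common vertices of the old and new path of pair `i`, in path order. -/
def commons (G : UFN V k) (i : Fin k) : List V :=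
  (G.old i).filter (fun v => decide (v ∈ G.new i))

/-- A block of pair `i` is a pair `(a, z)` of consecutive common vertices of the
old and new paths of `i`. -/
def IsBlock (G : UFN V k) (i : Fin k) (b : V × V) : Prop :=
  b ∈ edgesOf (G.commons i)

/-- A (candidate) block: a pair index together with its start and end vertices. -/
abbrev Blk (V : Type) (k : ℕ) := Fin k × V × V

def IsBlk (G : UFN V k) (b : Blk V k) : Prop := G.IsBlock b.1 b.2

/-- The old-path segment of a block. -/
def blkOldSeg (G : UFN V k) (b : Blk V k) : List V := segment (G.old b.1) b.2.1 b.2.2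

/-- The update-path segment of a block. -/
def blkNewSeg (G : UFN V k) (b : Blk V k) : List V := segment (G.new b.1) b.2.1 b.2.2

/-- Block `b1` depends on block `b2` (written `b1 → b2`) if they belong to
different pairs and some edge lies on `b1`'s update path and on `b2`'s old path
with capacity less than the sum of the two demands. -/
def Dep (G : UFN V k) (b1 b2 : Blk V k) : Prop :=
  G.IsBlk b1 ∧ G.IsBlk b2 ∧ b1.1 ≠ b2.1 ∧
  ∃ e : V × V, e ∈ edgesOf (G.blkNewSeg b1) ∧ e ∈ edgesOf (G.blkOldSeg b2) ∧
    G.cap e.1 e.2 < G.demand b1.1 + G.demand b2.1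

/-- The dependency graph contains a directed cycle. -/
def HasDepCycle (G : UFN V k) : Prop := ∃ b : Blk V k, Relation.TransGen G.Dep b b

/-- The number of rounds used by an update sequence. -/
def numRounds [Fintype V] (R : V × Fin k → ℕ) : ℕ :=
  (Finset.image R Finset.univ).card

/-- An update `(v, i)` is empty if `v`'s outgoing old edge and outgoing new edge
for pair `i` coincide (in particular if `v` has no outgoing edge for pair `i`). -/
def EmptyUpd (G : UFN V k) (u : V × Fin k) : Prop :=
  outEdge (G.old u.2) u.1 = outEdge (G.new u.2) u.1

instance (G : UFN V k) (u : V × Fin k) : Decidable (G.EmptyUpd u) :=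
  inferInstanceAs (Decidable (outEdge (G.old u.2) u.1 = outEdge (G.new u.2) u.1))

/-- `R` updates every block in (at most) 3 consecutive rounds: first all internal
update-path vertices of the block, then the start vertex, then all old-path-only
vertices of the block. -/
def BlockPattern (G : UFN V k) (R : V × Fin k → ℕ) : Prop :=
  ∀ b : Blk V k, G.IsBlk b → ∃ r : ℕ,
    (∀ v ∈ G.blkNewSeg b, v ≠ b.2.1 → v ≠ b.2.2 → R (v, b.1) = r) ∧
    R (b.2.1, b.1) = r + 1 ∧
    (∀ v ∈ G.blkOldSeg b, v ∉ G.new b.1 → R (v, b.1) = r + 2)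

/-- The size of the network (total length of the flow paths). -/
def size (G : UFN V k) : ℕ := ∑ i : Fin k, ((G.old i).length + (G.new i).length)

end UFN

end FlowUpdate

set_option linter.unusedSectionVars false

namespace FlowUpdate

variable {V : Type} [DecidableEq V] {k : ℕ}

lemma edgesOf_nil : edgesOf ([] : List V) = [] := rfl
lemma edgesOf_single (u : V) : edgesOf [u] = [] := rfl
lemma edgesOf_cons₂ (u w : V) (q : List V) :
    edgesOf (u :: w :: q) = (u, w) :: edgesOf (w :: q) := rfl

lemma mem_edgesOf_iff {x y : V} : ∀ {p : List V},
    (x, y) ∈ edgesOf p ↔ ∃ l r, p = l ++ x :: y :: r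
  | [] => by
      simp only [edgesOf_nil, List.not_mem_nil, false_iff, not_exists]
      intro l r h
      exact absurd h (by simp)
  | [u] => by
      simp only [edgesOf_single, List.not_mem_nil, false_iff, not_exists]
      intro l r h
      rcases l with _ | ⟨a, l⟩ <;> simp_all
  | u :: w :: q => by
      rw [edgesOf_cons₂, List.mem_cons, mem_edgesOf_iff (p := w :: q)]
      constructor
      · rintro (h | ⟨l, r, h⟩)
        · obtain ⟨h1, h2⟩ := Prod.mk.injEq .. ▸ h
          exact ⟨[], q, by simp [← h1, ← h2]⟩
        · exact ⟨u :: l, r, by simp [h]⟩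
      · rintro ⟨l, r, h⟩
        rcases l with _ | ⟨a, l⟩
        · simp only [List.nil_append, List.cons.injEq] at h
          exact Or.inl (by simp [h.1, h.2.1])
        · simp only [List.cons_append, List.cons.injEq] at h
          exact Or.inr ⟨l, r, h.2⟩

lemma mem_of_edge {x y : V} {p : List V} (h : (x, y) ∈ edgesOf p) : x ∈ p ∧ y ∈ p := by
  obtain ⟨l, r, rfl⟩ := mem_edgesOf_iff.1 h
  constructor <;> simp

lemma edge_infix {x y : V} {q : List V} (l r : List V) (h : (x, y) ∈ edgesOf q) :
    (x, y) ∈ edgesOf (l ++ q ++ r) := by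
  obtain ⟨l', r', rfl⟩ := mem_edgesOf_iff.1 h
  exact mem_edgesOf_iff.2 ⟨l ++ l', r' ++ r, by simp⟩

lemma chain'_rel_of_edge {R : V → V → Prop} : ∀ {p : List V}, List.Chain' R p →
    ∀ {x y : V}, (x, y) ∈ edgesOf p → R x y
  | [] => by simp [edgesOf_nil]
  | [u] => by simp [edgesOf_single]
  | u :: w :: q => fun h x y hm => by
      rw [edgesOf_cons₂, List.mem_cons] at hm
      rcases hm with hm | hm
      · obtain ⟨h1, h2⟩ := Prod.mk.injEq .. ▸ hm
        exact h1 ▸ h2 ▸ (List.isChain_cons_cons.1 h).1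
      · exact chain'_rel_of_edge (List.isChain_cons_cons.1 h).2 hm

lemma chain'_of_edges {R : V → V → Prop} : ∀ {p : List V},
    (∀ x y : V, (x, y) ∈ edgesOf p → R x y) → List.Chain' R p
  | [] => fun _ => List.isChain_nil
  | [u] => fun _ => List.isChain_singleton u
  | u :: w :: q => fun h => List.isChain_cons_cons.2
      ⟨h u w (by rw [edgesOf_cons₂]; simp),
       chain'_of_edges (fun x y hm => h x y (by rw [edgesOf_cons₂]; exact List.mem_cons_of_mem _ hm))⟩

lemma edge_unique : ∀ {p : List V}, p.Nodup → ∀ {v w w' : V},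
    (v, w) ∈ edgesOf p → (v, w') ∈ edgesOf p → w = w'
  | [] => by simp [edgesOf_nil]
  | [u] => by simp [edgesOf_single]
  | u :: x :: q => fun hnd v w w' h1 h2 => by
      have hu : u ∉ x :: q := (List.nodup_cons.1 hnd).1
      rw [edgesOf_cons₂, List.mem_cons] at h1 h2
      rcases h1 with h1 | h1 <;> rcases h2 with h2 | h2
      · obtain ⟨a1, b1⟩ := Prod.mk.injEq .. ▸ h1
        obtain ⟨a2, b2⟩ := Prod.mk.injEq .. ▸ h2
        rw [b1, b2]
      · obtain ⟨a1, b1⟩ := Prod.mk.injEq .. ▸ h1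
        exact absurd ((a1 ▸ mem_of_edge h2).1) hu
      · obtain ⟨a2, b2⟩ := Prod.mk.injEq .. ▸ h2
        exact absurd ((a2 ▸ mem_of_edge h1).1) hu
      · exact edge_unique (List.nodup_cons.1 hnd).2 h1 h2

lemma not_edge_of_getLast {p : List V} (hnd : p.Nodup) {t : V} (hl : p.getLast? = some t)
    {y : V} (h : (t, y) ∈ edgesOf p) : False := by
  obtain ⟨l, r, hp⟩ := mem_edgesOf_iff.1 h
  subst hp
  have ht : t ∉ y :: r := by
    have := (List.nodup_append.1 hnd).2.1
    exact (List.nodup_cons.1 this).1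
  have hg : (y :: r).getLast? = some ((y :: r).getLast (by simp)) :=
    List.getLast?_eq_getLast _
  have h2 : (l ++ t :: y :: r).getLast? = some ((y :: r).getLast (by simp)) := by
    rw [show l ++ t :: y :: r = (l ++ [t]) ++ (y :: r) by simp,
      List.getLast?_append, hg]
    rfl
  have := hl.symm.trans h2
  obtain rfl := Option.some.inj this
  exact ht (List.getLast_mem _)

lemma exists_succ {p : List V} {t v : V} (hl : p.getLast? = some t) (hv : v ∈ p)
    (hne : v ≠ t) : ∃ w, (v, w) ∈ edgesOf p := by
  obtain ⟨l, r, rfl⟩ := List.append_of_mem hv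
  rcases r with _ | ⟨w, r'⟩
  · rw [List.getLast?_concat] at hl
    exact (hne (Option.some.inj hl)).elim
  · exact ⟨w, mem_edgesOf_iff.2 ⟨l, r', rfl⟩⟩

lemma pairwise_rel_of_edge {R : V → V → Prop} {p : List V} (hp : p.Pairwise R) {x y : V}
    (h : (x, y) ∈ edgesOf p) : R x y := by
  obtain ⟨l, r, rfl⟩ := mem_edgesOf_iff.1 h
  have h1 := (List.pairwise_append.1 hp).2.1
  exact (List.pairwise_cons.1 h1).1 y (by simp)

lemma pairwise_split {R : V → V → Prop} (hasymm : ∀ x y, R x y → R y x → False) :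
    ∀ {p : List V}, p.Pairwise R → ∀ {a z : V}, a ∈ p → z ∈ p → R a z →
      ∃ l m r, p = l ++ a :: m ++ z :: r
  | [] => by simp
  | u :: q => fun hp a z ha hz hR => by
      obtain ⟨hu, hq⟩ := List.pairwise_cons.1 hp
      by_cases hau : a = u
      · subst hau
        have hzq : z ∈ q := by
          rcases List.mem_cons.1 hz with rfl | hz
          · exact (hasymm _ _ hR hR).elim
          · exact hz
        obtain ⟨m, r, rfl⟩ := List.append_of_mem hzq
        exact ⟨[], m, r, by simp⟩
      · have haq : a ∈ q := (List.mem_cons.1 ha).resolve_left hau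
        have hzq : z ∈ q := by
          rcases List.mem_cons.1 hz with rfl | hz
          · exact (hasymm _ _ hR (hu _ haq)).elim
          · exact hz
        obtain ⟨l, m, r, hd⟩ := pairwise_split hasymm hq haq hzq hR
        exact ⟨u :: l, m, r, by simp [hd]⟩

lemma pairwise_between {R : V → V → Prop} {p l m r : List V} {a z : V}
    (hp : p.Pairwise R) (hd : p = l ++ a :: m ++ z :: r) :
    R a z ∧ ∀ x ∈ m, R a x ∧ R x z := by
  subst hd
  obtain ⟨h1, h2, h3⟩ := List.pairwise_append.1 hp
  obtain ⟨-, h4, -⟩ := List.pairwise_append.1 h1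
  obtain ⟨h5, -⟩ := List.pairwise_cons.1 h4
  exact ⟨h3 a (by simp) z (by simp), fun x hx =>
    ⟨h5 x hx, h3 x (by simp [hx]) z (by simp)⟩⟩

lemma no_between {f : V → ℕ} {C cl cr : List V} {c c' x : V}
    (hC : C.Pairwise (fun u v => f u < f v)) (hd : C = cl ++ c :: c' :: cr)
    (hx : x ∈ C) (h1 : f c < f x) (h2 : f x < f c') : False := by
  subst hd
  obtain ⟨hcl, h3, hrel⟩ := List.pairwise_append.1 hC
  obtain ⟨hc1, h4⟩ := List.pairwise_cons.1 h3
  obtain ⟨hc2, -⟩ := List.pairwise_cons.1 h4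
  rcases List.mem_append.1 hx with hx | hx
  · exact absurd (hrel x hx c (by simp)) (by omega)
  · rcases List.mem_cons.1 hx with rfl | hx
    · omega
    · rcases List.mem_cons.1 hx with rfl | hx
      · omega
      · exact absurd (hc2 x hx) (by omega)

lemma nodup_split {p l m r : List V} {a z : V} (hd : p = l ++ a :: m ++ z :: r)
    (hnd : p.Nodup) : a ∉ l ∧ z ∉ m ∧ a ≠ z := by
  subst hd
  obtain ⟨h1, h2, h3⟩ := List.nodup_append.1 hnd
  obtain ⟨-, -, h5⟩ := List.nodup_append.1 h1
  refine ⟨fun hal => h5 a hal a (by simp) rfl, fun hzm => h3 z (by simp [hzm]) z (by simp) rfl,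
    fun he => h3 a (by simp) a (by simp [he]) rfl⟩

lemma dropWhile_append_cons {a : V} : ∀ (l : List V) (rest : List V), a ∉ l →
    (l ++ a :: rest).dropWhile (fun v => decide (v ≠ a)) = a :: rest
  | [], rest => fun _ => by simp [List.dropWhile_cons]
  | b :: l, rest => fun hal => by
      have hba : b ≠ a := fun h => hal (by simp [h])
      rw [List.cons_append, List.dropWhile_cons, if_pos (by simp [hba])]
      exact dropWhile_append_cons l rest (fun h => hal (by simp [h]))

lemma takeWhile_append_cons {z : V} : ∀ (m rest : List V), z ∉ m →
    (m ++ z :: rest).takeWhile (fun v => decide (v ≠ z)) = m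
  | [], rest => fun _ => by simp [List.takeWhile_cons]
  | b :: m, rest => fun hzm => by
      have hbz : b ≠ z := fun h => hzm (by simp [h])
      rw [List.cons_append, List.takeWhile_cons, if_pos (by simp [hbz]),
        takeWhile_append_cons m rest (fun h => hzm (by simp [h]))]

lemma segment_eq {p l m r : List V} {a z : V} (hd : p = l ++ a :: m ++ z :: r)
    (hal : a ∉ l) (hzm : z ∉ m) (haz : a ≠ z) :
    segment p a z = (a :: m) ++ [z] := by
  subst hd
  have h1 : ((l ++ a :: m) ++ z :: r).dropWhile (fun v => decide (v ≠ a))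
      = a :: (m ++ z :: r) := by
    rw [show (l ++ a :: m) ++ z :: r = l ++ (a :: (m ++ z :: r)) by simp]
    exact dropWhile_append_cons l _ hal
  have hzam : z ∉ a :: m := by simp [hzm, Ne.symm haz]
  rw [segment, h1, show a :: (m ++ z :: r) = (a :: m) ++ z :: r by simp,
    takeWhile_append_cons (a :: m) r hzam]

lemma walk {T : List V} : ∀ {q : List V},
    (∀ x y : V, (x, y) ∈ edgesOf q → x ∈ T → (x, y) ∈ edgesOf T) →
    (∀ h : V, q.head? = some h → h ∈ T) →
    ∀ e ∈ edgesOf q, e ∈ edgesOf T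
  | [] => by simp [edgesOf_nil]
  | [u] => by simp [edgesOf_single]
  | u :: w :: q => fun hstep hh e he => by
      have hu : u ∈ T := hh u rfl
      have h1 : (u, w) ∈ edgesOf T :=
        hstep u w (by rw [edgesOf_cons₂]; simp) hu
      rw [edgesOf_cons₂, List.mem_cons] at he
      rcases he with rfl | he
      · exact h1
      · refine walk (fun x y hxy hx => hstep x y ?_ hx) ?_ e he
        · rw [edgesOf_cons₂]; exact List.mem_cons_of_mem _ hxy
        · intro h hh'
          rw [List.head?_cons] at hh'
          obtain rfl := Option.some.inj hh'
          exact (mem_of_edge h1).2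

lemma last_edge {c' : V} : ∀ (m : List V) (c : V), ∃ u, (u, c') ∈ edgesOf (c :: m ++ [c'])
  | [], c => ⟨c, by simp [edgesOf_cons₂]⟩
  | b :: m, c => by
      obtain ⟨u, hu⟩ := last_edge m b
      exact ⟨u, show (u, c') ∈ edgesOf (c :: b :: (m ++ [c'])) from by
        rw [edgesOf_cons₂]; exact List.mem_cons_of_mem _ hu⟩

lemma pairwise_of_chain' {R : V → V → Prop} (htr : Transitive R) :
    ∀ {p : List V}, List.Chain' R p → p.Pairwise R
  | [] => fun _ => List.Pairwise.nil
  | u :: q => fun h => by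
      replace h := List.isChain_cons.1 h
      have hq := pairwise_of_chain' htr h.2
      refine List.pairwise_cons.2 ⟨?_, hq⟩
      intro x hx
      obtain ⟨l, r, rfl⟩ := List.append_of_mem hx
      rcases l with _ | ⟨b, l⟩
      · exact h.1 x rfl
      · have hb : R u b := h.1 b rfl
        have : R b x := by
          have := List.pairwise_append.1 hq
          exact (this.2.2) b (by simp) x (by simp)
        exact htr hb this


namespace UFN

variable {G : UFN V k}

lemma mem_commons_old {i : Fin k} {v : V} (h : v ∈ G.commons i) : v ∈ G.old i :=
  List.mem_of_mem_filter h

lemma mem_commons_new {i : Fin k} {v : V} (h : v ∈ G.commons i) : v ∈ G.new i := by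
  simpa using List.of_mem_filter h

lemma mem_commons {i : Fin k} {v : V} (h1 : v ∈ G.old i) (h2 : v ∈ G.new i) :
    v ∈ G.commons i :=
  List.mem_filter.2 ⟨h1, by simpa using h2⟩

lemma old_new_pairwise (hWF : G.WellFormed) (i : Fin k) :
    ∃ f : V → ℕ, (G.old i).Pairwise (fun u v => f u < f v) ∧
      (G.new i).Pairwise (fun u v => f u < f v) := by
  obtain ⟨f, hf⟩ := hWF.2.1 i
  refine ⟨f, ?_, ?_⟩
  · refine pairwise_of_chain' (R := fun u v => f u < f v)
      (fun _ _ _ h1 h2 => lt_trans h1 h2) (chain'_of_edges ?_)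
    intro x y hxy
    exact hf (x, y) (List.mem_append_left _ hxy)
  · refine pairwise_of_chain' (R := fun u v => f u < f v)
      (fun _ _ _ h1 h2 => lt_trans h1 h2) (chain'_of_edges ?_)
    intro x y hxy
    exact hf (x, y) (List.mem_append_right _ hxy)

lemma force_new (hWF : G.WellFormed) {U : Set (V × Fin k)} {i : Fin k} {T : List V}
    (hT : IsPathIn (G.active U i) G.s G.t T) {x y : V} (hx : x ∈ T)
    (hxy : (x, y) ∈ edgesOf (G.new i)) (hcase : (x, i) ∈ U ∨ x ∉ G.old i) :
    (x, y) ∈ edgesOf T := by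
  obtain ⟨hh, hl, hch, hnd⟩ := hT
  obtain ⟨hop, hnp⟩ := hWF.1 i
  have hxt : x ≠ G.t := fun h => not_edge_of_getLast hnp.2.2 hnp.2.1 (h ▸ hxy)
  obtain ⟨w, hw⟩ := exists_succ hl hx hxt
  have hact : G.active U i (x, w) := chain'_rel_of_edge hch hw
  rcases hact with ⟨hold, hnu⟩ | ⟨hnew, hu⟩
  · rcases hcase with hU | hxo
    · exact absurd hU hnu
    · exact absurd (mem_of_edge hold).1 hxo
  · rwa [edge_unique hnp.2.2 hnew hxy] at hw

lemma force_old (hWF : G.WellFormed) {U : Set (V × Fin k)} {i : Fin k} {T : List V}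
    (hT : IsPathIn (G.active U i) G.s G.t T) {x y : V} (hx : x ∈ T)
    (hxy : (x, y) ∈ edgesOf (G.old i)) (hcase : (x, i) ∉ U ∨ x ∉ G.new i) :
    (x, y) ∈ edgesOf T := by
  obtain ⟨hh, hl, hch, hnd⟩ := hT
  obtain ⟨hop, hnp⟩ := hWF.1 i
  have hxt : x ≠ G.t := fun h => not_edge_of_getLast hop.2.2 hop.2.1 (h ▸ hxy)
  obtain ⟨w, hw⟩ := exists_succ hl hx hxt
  have hact : G.active U i (x, w) := chain'_rel_of_edge hch hw
  rcases hact with ⟨hold, hnu⟩ | ⟨hnew, hu⟩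
  · rwa [edge_unique hop.2.2 hold hxy] at hw
  · rcases hcase with hU | hxn
    · exact absurd hu hU
    · exact absurd (mem_of_edge hnew).1 hxn

lemma trav_new (hWF : G.WellFormed) {U : Set (V × Fin k)} {i : Fin k} {T : List V}
    (hT : IsPathIn (G.active U i) G.s G.t T) {c c' : V}
    (hcc : (c, c') ∈ edgesOf (G.commons i)) (hc : c ∈ T) (hU : (c, i) ∈ U) :
    (∀ e ∈ edgesOf (segment (G.new i) c c'), e ∈ edgesOf T) ∧ c' ∈ T := by
  obtain ⟨f, hfo, hfn⟩ := old_new_pairwise hWF i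
  have hCpw : (G.commons i).Pairwise (fun u v => f u < f v) :=
    List.Pairwise.sublist List.filter_sublist hfo
  obtain ⟨cl, cr, hCd⟩ := mem_edgesOf_iff.1 hcc
  have hfcc : f c < f c' := pairwise_rel_of_edge hCpw hcc
  have hcN : c ∈ G.new i := mem_commons_new (mem_of_edge hcc).1
  have hc'N : c' ∈ G.new i := mem_commons_new (mem_of_edge hcc).2
  obtain ⟨l, m, r, hnd⟩ :=
    pairwise_split (fun x y h1 h2 => absurd h1 (by omega)) hfn hcN hc'N hfcc
  have hnewND : (G.new i).Nodup := (hWF.1 i).2.2.2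
  obtain ⟨hcl, hc'm, hcc'⟩ := nodup_split hnd hnewND
  have hseg : segment (G.new i) c c' = (c :: m) ++ [c'] := segment_eq hnd hcl hc'm hcc'
  have hmid : ∀ x ∈ m, x ∉ G.old i := by
    intro x hx hxo
    have hxn : x ∈ G.new i := by rw [hnd]; simp [hx]
    have hxC : x ∈ G.commons i := mem_commons hxo hxn
    have h2 := (pairwise_between hfn hnd).2 x hx
    exact no_between hCpw hCd hxC h2.1 h2.2
  have hsegE : ∀ e ∈ edgesOf ((c :: m) ++ [c']), e ∈ edgesOf (G.new i) := by
    intro e he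
    obtain ⟨x, y⟩ := e
    rw [hnd, show l ++ c :: m ++ c' :: r = l ++ ((c :: m) ++ [c']) ++ r by simp]
    exact edge_infix _ _ he
  have hqnd : ((c :: m) ++ [c']).Nodup := by
    have hsub : ((c :: m) ++ [c']).Sublist (G.new i) := by
      rw [hnd, show l ++ c :: m ++ c' :: r = l ++ (((c :: m) ++ [c']) ++ r) by simp]
      exact (List.sublist_append_left _ _).trans (List.sublist_append_right _ _)
    exact hsub.nodup hnewND
  have hstep : ∀ x y : V, (x, y) ∈ edgesOf ((c :: m) ++ [c']) → x ∈ T →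
      (x, y) ∈ edgesOf T := by
    intro x y he hxT
    have hxy : (x, y) ∈ edgesOf (G.new i) := hsegE _ he
    have hxq : x = c ∨ x ∈ m := by
      rcases List.mem_append.1 (mem_of_edge he).1 with hx | hx
      · exact List.mem_cons.1 hx
      · exfalso
        have hxc' : x = c' := by simpa using hx
        exact not_edge_of_getLast hqnd List.getLast?_concat (hxc' ▸ he)
    rcases hxq with rfl | hx
    · exact force_new hWF hT hxT hxy (Or.inl hU)
    · exact force_new hWF hT hxT hxy (Or.inr (hmid x hx))
  have hwalk : ∀ e ∈ edgesOf ((c :: m) ++ [c']), e ∈ edgesOf T := by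
    refine walk hstep ?_
    intro h hh
    have : c = h := by simpa using hh
    exact this ▸ hc
  refine ⟨by rw [hseg]; exact hwalk, ?_⟩
  obtain ⟨u, hu⟩ := last_edge m c
  exact (mem_of_edge (hwalk _ hu)).2

lemma trav_old (hWF : G.WellFormed) {U : Set (V × Fin k)} {i : Fin k} {T : List V}
    (hT : IsPathIn (G.active U i) G.s G.t T) {c c' : V}
    (hcc : (c, c') ∈ edgesOf (G.commons i)) (hc : c ∈ T) (hU : (c, i) ∉ U) :
    (∀ e ∈ edgesOf (segment (G.old i) c c'), e ∈ edgesOf T) ∧ c' ∈ T := by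
  obtain ⟨f, hfo, hfn⟩ := old_new_pairwise hWF i
  have hCpw : (G.commons i).Pairwise (fun u v => f u < f v) :=
    List.Pairwise.sublist List.filter_sublist hfo
  obtain ⟨cl, cr, hCd⟩ := mem_edgesOf_iff.1 hcc
  have hfcc : f c < f c' := pairwise_rel_of_edge hCpw hcc
  have hcO : c ∈ G.old i := mem_commons_old (mem_of_edge hcc).1
  have hc'O : c' ∈ G.old i := mem_commons_old (mem_of_edge hcc).2
  obtain ⟨l, m, r, hnd⟩ :=
    pairwise_split (fun x y h1 h2 => absurd h1 (by omega)) hfo hcO hc'O hfcc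
  have holdND : (G.old i).Nodup := (hWF.1 i).1.2.2
  obtain ⟨hcl, hc'm, hcc'⟩ := nodup_split hnd holdND
  have hseg : segment (G.old i) c c' = (c :: m) ++ [c'] := segment_eq hnd hcl hc'm hcc'
  have hmid : ∀ x ∈ m, x ∉ G.new i := by
    intro x hx hxn
    have hxo : x ∈ G.old i := by rw [hnd]; simp [hx]
    have hxC : x ∈ G.commons i := mem_commons hxo hxn
    have h2 := (pairwise_between hfo hnd).2 x hx
    exact no_between hCpw hCd hxC h2.1 h2.2
  have hsegE : ∀ e ∈ edgesOf ((c :: m) ++ [c']), e ∈ edgesOf (G.old i) := by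
    intro e he
    obtain ⟨x, y⟩ := e
    rw [hnd, show l ++ c :: m ++ c' :: r = l ++ ((c :: m) ++ [c']) ++ r by simp]
    exact edge_infix _ _ he
  have hqnd : ((c :: m) ++ [c']).Nodup := by
    have hsub : ((c :: m) ++ [c']).Sublist (G.old i) := by
      rw [hnd, show l ++ c :: m ++ c' :: r = l ++ (((c :: m) ++ [c']) ++ r) by simp]
      exact (List.sublist_append_left _ _).trans (List.sublist_append_right _ _)
    exact hsub.nodup holdND
  have hstep : ∀ x y : V, (x, y) ∈ edgesOf ((c :: m) ++ [c']) → x ∈ T →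
      (x, y) ∈ edgesOf T := by
    intro x y he hxT
    have hxy : (x, y) ∈ edgesOf (G.old i) := hsegE _ he
    have hxq : x = c ∨ x ∈ m := by
      rcases List.mem_append.1 (mem_of_edge he).1 with hx | hx
      · exact List.mem_cons.1 hx
      · exfalso
        have hxc' : x = c' := by simpa using hx
        exact not_edge_of_getLast hqnd List.getLast?_concat (hxc' ▸ he)
    rcases hxq with rfl | hx
    · exact force_old hWF hT hxT hxy (Or.inl hU)
    · exact force_old hWF hT hxT hxy (Or.inr (hmid x hx))
  have hwalk : ∀ e ∈ edgesOf ((c :: m) ++ [c']), e ∈ edgesOf T := by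
    refine walk hstep ?_
    intro h hh
    have : c = h := by simpa using hh
    exact this ▸ hc
  refine ⟨by rw [hseg]; exact hwalk, ?_⟩
  obtain ⟨u, hu⟩ := last_edge m c
  exact (mem_of_edge (hwalk _ hu)).2

lemma visit (hWF : G.WellFormed) {U : Set (V × Fin k)} {i : Fin k} {T : List V}
    (hT : IsPathIn (G.active U i) G.s G.t T) : ∀ c ∈ G.commons i, c ∈ T := by
  have key : ∀ (cl : List V) (c : V) (cr : List V), G.commons i = cl ++ c :: cr → c ∈ T := by
    intro cl
    induction cl using List.reverseRecOn with
    | nil =>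
      intro c cr hd
      rw [List.nil_append] at hd
      have hoh := (hWF.1 i).1.1
      have hnh := (hWF.1 i).2.1
      have hsN : G.s ∈ G.new i := List.mem_of_mem_head? (by rw [hnh]; rfl)
      have hC : ∃ q, G.commons i = G.s :: q := by
        rcases ho : G.old i with _ | ⟨a, q⟩
        · rw [ho] at hoh; simp at hoh
        · rw [ho] at hoh
          simp only [List.head?_cons, Option.some.injEq] at hoh
          subst hoh
          exact ⟨_, by rw [UFN.commons, ho, List.filter_cons, if_pos (by simpa using hsN)]⟩
      obtain ⟨q, hCq⟩ := hC
      rw [hCq] at hd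
      have hcs : G.s = c := (List.cons.injEq .. ▸ hd).1
      rw [← hcs]
      exact List.mem_of_mem_head? (by rw [hT.1]; rfl)
    | append_singleton l c0 ih =>
      intro c cr hd
      have hc0 : c0 ∈ T := ih c0 (c :: cr) (by simpa using hd)
      have hedge : (c0, c) ∈ edgesOf (G.commons i) :=
        mem_edgesOf_iff.2 ⟨l, cr, by simpa using hd⟩
      by_cases hU : (c0, i) ∈ U
      · exact (trav_new hWF hT hedge hc0 hU).2
      · exact (trav_old hWF hT hedge hc0 hU).2
  intro c hc
  obtain ⟨cl, cr, hd⟩ := List.append_of_mem hc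
  exact key cl c cr hd

end UFN

end FlowUpdate

open FlowUpdate in
/-- In any feasible update sequence, if block `b1` depends on
block `b2`, then the start vertex of `b2` is updated in a round strictly before
the round in which the start vertex of `b1` is updated. -/
theorem stmt15 {V : Type} [DecidableEq V] {k : ℕ} (G : UFN V k)
    (hWF : G.WellFormed) (R : V × Fin k → ℕ) (hR : G.Feasible R)
    (b1 b2 : UFN.Blk V k) (hdep : G.Dep b1 b2) :
    R (b2.2.1, b2.1) < R (b1.2.1, b1.1) := by
  classical
  obtain ⟨hB1, hB2, hij, e, he1, he2, hcap⟩ := hdep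
  by_contra hcon
  push_neg at hcon
  obtain ⟨T, hT, hcapT⟩ := hR (R (b1.2.1, b1.1)) {(b1.2.1, b1.1)}
    (by intro u hu; simp only [Set.mem_singleton_iff] at hu; rw [hu])
  have haU : ((b1.2.1, b1.1) : V × Fin k) ∈
      ({u | R u < R (b1.2.1, b1.1)} ∪ {(b1.2.1, b1.1)} : Set (V × Fin k)) :=
    Set.mem_union_right _ rfl
  have ha'U : ((b2.2.1, b2.1) : V × Fin k) ∉
      ({u | R u < R (b1.2.1, b1.1)} ∪ {(b1.2.1, b1.1)} : Set (V × Fin k)) := by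
    intro h
    rcases h with h | h
    · exact absurd h (by simp only [Set.mem_setOf_eq]; omega)
    · exact hij (congrArg Prod.snd h).symm
  have hTi := (hT b1.1).1
  have hTj := (hT b2.1).1
  have hB1' : (b1.2.1, b1.2.2) ∈ edgesOf (G.commons b1.1) := by
    rw [Prod.mk.eta]; exact hB1
  have hB2' : (b2.2.1, b2.2.2) ∈ edgesOf (G.commons b2.1) := by
    rw [Prod.mk.eta]; exact hB2
  have hai : b1.2.1 ∈ T b1.1 :=
    UFN.visit hWF hTi _ (FlowUpdate.mem_of_edge hB1').1
  have ha'j : b2.2.1 ∈ T b2.1 :=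
    UFN.visit hWF hTj _ (FlowUpdate.mem_of_edge hB2').1
  have heTi : e ∈ edgesOf (T b1.1) :=
    (UFN.trav_new hWF hTi hB1' hai haU).1 e he1
  have heTj : e ∈ edgesOf (T b2.1) :=
    (UFN.trav_old hWF hTj hB2' ha'j ha'U).1 e he2
  have hsum := hcapT e.1 e.2
  have hpair :
      (∑ x ∈ ({b1.1, b2.1} : Finset (Fin k)),
        if (e.1, e.2) ∈ edgesOf (T x) then G.demand x else 0) ≤
      ∑ x : Fin k, if (e.1, e.2) ∈ edgesOf (T x) then G.demand x else 0 :=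
    Finset.sum_le_sum_of_subset (Finset.subset_univ _)
  rw [Finset.sum_pair hij, Prod.mk.eta, if_pos heTi, if_pos heTj] at hpair
  exact absurd (hpair.trans hsum) (not_le.2 hcap)
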